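/- Every closed subspace of an α-subparacompact space is α-subparacompact. -/
import Mathlib


open Set TopologicalSpace

universe u v

variable {X : Type u} {Y : Type v}

/-- A set is an α-set (α-open) w.r.t. the topology `T` if `A ⊆ Int (Cl (Int A))`. -/
def AlphaOpen (T : TopologicalSpace X) (A : Set X) : Prop :=
  letI := T
  A ⊆ interior (closure (interior A))

/-- The α-topology `𝒯^α`, whose open sets are exactly the α-sets of `T`. -/
def alphaTop (T : TopologicalSpace X) : TopologicalSpace X :=
  letI := T
  { IsOpen := fun A => A ⊆ interior (closure (interior A))
    isOpen_univ := by simp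
    isOpen_inter := by
      intro A B hA hB
      have hsub : interior (closure (interior A)) ∩ interior (closure (interior B)) ⊆
          closure (interior (A ∩ B)) := by
        intro x hx
        have h1 : interior (closure (interior B)) ∩ closure (interior A) ⊆
            closure (interior (closure (interior B)) ∩ interior A) :=
          isOpen_interior.inter_closure
        have h2 : interior (closure (interior B)) ∩ interior A ⊆
            closure (interior A ∩ interior B) := by
          intro y hy
          have h : interior A ∩ closure (interior B) ⊆ closure (interior A ∩ interior B) :=
            isOpen_interior.inter_closure
          exact h ⟨hy.2, interior_subset hy.1⟩
        have h3 : closure (interior (closure (interior B)) ∩ interior A) ⊆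
            closure (interior A ∩ interior B) := by
          calc closure (interior (closure (interior B)) ∩ interior A)
              ⊆ closure (closure (interior A ∩ interior B)) := closure_mono h2
            _ = closure (interior A ∩ interior B) := closure_closure
        have hx' : x ∈ closure (interior A ∩ interior B) :=
          h3 (h1 ⟨hx.2, interior_subset hx.1⟩)
        rwa [← interior_inter] at hx'
      intro x hx
      exact interior_maximal hsub (isOpen_interior.inter isOpen_interior) ⟨hA hx.1, hB hx.2⟩
    isOpen_sUnion := by
      intro S hS x hx
      obtain ⟨t, htS, hxt⟩ := hx
      have h : interior (closure (interior t)) ⊆ interior (closure (interior (⋃₀ S))) :=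
        interior_mono (closure_mono (interior_mono (subset_sUnion_of_mem htS)))
      exact h (hS t htS hxt) }

/-- `A` is semi-open w.r.t. `T` if `A ⊆ Cl (Int A)`. -/
def SemiOpen (T : TopologicalSpace X) (A : Set X) : Prop :=
  letI := T
  A ⊆ closure (interior A)

/-- `A` is semi-closed if its complement is semi-open. -/
def SemiClosed (T : TopologicalSpace X) (A : Set X) : Prop :=
  SemiOpen T Aᶜ

/-- The semi-closure of `A`: the intersection of all semi-closed sets containing `A`. -/
def sCl (T : TopologicalSpace X) (A : Set X) : Set X :=
  ⋂₀ {C | SemiClosed T C ∧ A ⊆ C}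

/-- `A` is sg-closed if `sCl A ⊆ U` whenever `A ⊆ U` with `U` semi-open. -/
def SgClosed (T : TopologicalSpace X) (A : Set X) : Prop :=
  ∀ U : Set X, SemiOpen T U → A ⊆ U → sCl T A ⊆ U

/-- `A` is sg-open if its complement is sg-closed. -/
def SgOpen (T : TopologicalSpace X) (A : Set X) : Prop :=
  SgClosed T Aᶜ

/-- `A` is regular closed w.r.t. `T` if `A = Cl (Int A)`. -/
def RegClosed (T : TopologicalSpace X) (A : Set X) : Prop :=
  letI := T
  A = closure (interior A)

/-- A family `𝒱` refines a family `𝒰` if every member of `𝒱` is contained in a member of `𝒰`. -/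
def Refines (𝒱 𝒰 : Set (Set X)) : Prop :=
  ∀ V ∈ 𝒱, ∃ U ∈ 𝒰, V ⊆ U

/-- A family of sets is locally finite if every point has a neighbourhood
meeting only finitely many members. -/
def LocFinite (T : TopologicalSpace X) (𝒱 : Set (Set X)) : Prop :=
  ∀ x : X, ∃ N ∈ @nhds X T x, {V ∈ 𝒱 | (V ∩ N).Nonempty}.Finite

/-- A family of sets is locally countable if every point has a neighbourhood
meeting only countably many members. -/
def LocCountable (T : TopologicalSpace X) (𝒱 : Set (Set X)) : Prop :=
  ∀ x : X, ∃ N ∈ @nhds X T x, {V ∈ 𝒱 | (V ∩ N).Nonempty}.Countable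

/-- A family of sets is discrete if every point has a neighbourhood
meeting at most one member. -/
def DiscreteFam (T : TopologicalSpace X) (𝒱 : Set (Set X)) : Prop :=
  ∀ x : X, ∃ N ∈ @nhds X T x, {V ∈ 𝒱 | (V ∩ N).Nonempty}.Subsingleton

/-- A family is σ-discrete if it is a countable union of discrete families. -/
def SigmaDiscrete (T : TopologicalSpace X) (𝒱 : Set (Set X)) : Prop :=
  ∃ 𝒲 : ℕ → Set (Set X), 𝒱 = ⋃ n, 𝒲 n ∧ ∀ n, DiscreteFam T (𝒲 n)

/-- A family is closure-preserving if for every subfamily the closure of the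
union is the union of the closures. -/
def ClosurePreserving (T : TopologicalSpace X) (𝒲 : Set (Set X)) : Prop :=
  letI := T
  ∀ 𝒲' ⊆ 𝒲, closure (⋃₀ 𝒲') = ⋃ W ∈ 𝒲', closure W

/-- A family is σ-closure-preserving if it is a countable union of
closure-preserving families. -/
def SigmaClosurePreserving (T : TopologicalSpace X) (𝒱 : Set (Set X)) : Prop :=
  ∃ 𝒲 : ℕ → Set (Set X), 𝒱 = ⋃ n, 𝒲 n ∧ ∀ n, ClosurePreserving T (𝒲 n)

/-- Semi-compact: every semi-open cover has a finite subcover. -/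
def SemiCompact (T : TopologicalSpace X) : Prop :=
  ∀ 𝒰 : Set (Set X), (∀ U ∈ 𝒰, SemiOpen T U) → ⋃₀ 𝒰 = univ →
    ∃ 𝒱 ⊆ 𝒰, 𝒱.Finite ∧ ⋃₀ 𝒱 = univ

/-- S-closed: for every semi-open cover there is a finite subfamily
whose closures cover. -/
def SClosed (T : TopologicalSpace X) : Prop :=
  letI := T
  ∀ 𝒰 : Set (Set X), (∀ U ∈ 𝒰, SemiOpen T U) → ⋃₀ 𝒰 = univ →
    ∃ 𝒱 ⊆ 𝒰, 𝒱.Finite ∧ (⋃ V ∈ 𝒱, closure V) = univ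

/-- s-closed: for every semi-open cover there is a finite subfamily
whose semi-closures cover. -/
def SmallSClosed (T : TopologicalSpace X) : Prop :=
  ∀ 𝒰 : Set (Set X), (∀ U ∈ 𝒰, SemiOpen T U) → ⋃₀ 𝒰 = univ →
    ∃ 𝒱 ⊆ 𝒰, 𝒱.Finite ∧ (⋃ V ∈ 𝒱, sCl T V) = univ

/-- rc-Lindelöf: every regular closed cover has a countable subcover. -/
def RcLindelof (T : TopologicalSpace X) : Prop :=
  ∀ 𝒰 : Set (Set X), (∀ U ∈ 𝒰, RegClosed T U) → ⋃₀ 𝒰 = univ →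
    ∃ 𝒱 ⊆ 𝒰, 𝒱.Countable ∧ ⋃₀ 𝒱 = univ

/-- sg-compact: every sg-open cover has a finite subcover. -/
def SgCompact (T : TopologicalSpace X) : Prop :=
  ∀ 𝒰 : Set (Set X), (∀ U ∈ 𝒰, SgOpen T U) → ⋃₀ 𝒰 = univ →
    ∃ 𝒱 ⊆ 𝒰, 𝒱.Finite ∧ ⋃₀ 𝒱 = univ

/-- `A` is S-closed relative to `X`: every cover of `A` by semi-open sets of `X`
has a finite subfamily whose closures cover `A`. -/
def SClosedRel (T : TopologicalSpace X) (A : Set X) : Prop :=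
  letI := T
  ∀ 𝒰 : Set (Set X), (∀ U ∈ 𝒰, SemiOpen T U) → A ⊆ ⋃₀ 𝒰 →
    ∃ 𝒱 ⊆ 𝒰, 𝒱.Finite ∧ A ⊆ ⋃ V ∈ 𝒱, closure V

/-- `A` is s-closed relative to `X`: every cover of `A` by semi-open sets of `X`
has a finite subfamily whose semi-closures cover `A`. -/
def SmallSClosedRel (T : TopologicalSpace X) (A : Set X) : Prop :=
  ∀ 𝒰 : Set (Set X), (∀ U ∈ 𝒰, SemiOpen T U) → A ⊆ ⋃₀ 𝒰 →
    ∃ 𝒱 ⊆ 𝒰, 𝒱.Finite ∧ A ⊆ ⋃ V ∈ 𝒱, sCl T V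

/-- Locally S-closed: every point has a neighbourhood which is S-closed relative to `X`. -/
def LocallySClosed (T : TopologicalSpace X) : Prop :=
  ∀ x : X, ∃ N ∈ @nhds X T x, SClosedRel T N

/-- Locally s-closed: every point has a neighbourhood which is s-closed relative to `X`. -/
def LocallySmallSClosed (T : TopologicalSpace X) : Prop :=
  ∀ x : X, ∃ N ∈ @nhds X T x, SmallSClosedRel T N

/-- para-S-closed: every semi-open cover has a locally finite refinement by
semi-open sets whose union is dense. -/
def ParaSClosed (T : TopologicalSpace X) : Prop :=
  letI := T
  ∀ 𝒰 : Set (Set X), (∀ U ∈ 𝒰, SemiOpen T U) → ⋃₀ 𝒰 = univ →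
    ∃ 𝒱 : Set (Set X), (∀ V ∈ 𝒱, SemiOpen T V) ∧ LocFinite T 𝒱 ∧ Refines 𝒱 𝒰 ∧
      closure (⋃₀ 𝒱) = univ

/-- para-rc-Lindelöf: every regular closed cover has a locally countable
refinement by regular closed sets. -/
def ParaRcLindelof (T : TopologicalSpace X) : Prop :=
  ∀ 𝒰 : Set (Set X), (∀ U ∈ 𝒰, RegClosed T U) → ⋃₀ 𝒰 = univ →
    ∃ 𝒱 : Set (Set X), (∀ V ∈ 𝒱, RegClosed T V) ∧ LocCountable T 𝒱 ∧ Refines 𝒱 𝒰 ∧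
      ⋃₀ 𝒱 = univ

/-- α-subparacompact: every α-open cover has a σ-discrete closed refinement covering `X`. -/
def AlphaSubparacompact (T : TopologicalSpace X) : Prop :=
  ∀ 𝒰 : Set (Set X), (∀ U ∈ 𝒰, AlphaOpen T U) → ⋃₀ 𝒰 = univ →
    ∃ 𝒱 : Set (Set X), (∀ V ∈ 𝒱, @IsClosed X T V) ∧ SigmaDiscrete T 𝒱 ∧ Refines 𝒱 𝒰 ∧
      ⋃₀ 𝒱 = univ

/-- gα-closed: `Cl_α A ⊆ U` whenever `A ⊆ U` with `U` α-open. -/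
def GAlphaClosed (T : TopologicalSpace X) (A : Set X) : Prop :=
  ∀ U : Set X, AlphaOpen T U → A ⊆ U → @closure X (alphaTop T) A ⊆ U

/-- α-paracompact: every α-open cover has a locally finite open refinement. -/
def AlphaParacompact (T : TopologicalSpace X) : Prop :=
  ∀ 𝒰 : Set (Set X), (∀ U ∈ 𝒰, AlphaOpen T U) → ⋃₀ 𝒰 = univ →
    ∃ 𝒱 : Set (Set X), (∀ V ∈ 𝒱, T.IsOpen V) ∧ LocFinite T 𝒱 ∧ Refines 𝒱 𝒰 ∧
      ⋃₀ 𝒱 = univ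

/-- Auxiliary: if `A` is closed and `U` is α-open in the subspace `A`,
then `val '' U ∪ Aᶜ` is α-open in `X`. -/
lemma alphaOpen_union_compl_of_subspace (T : TopologicalSpace X) (A : Set X)
    (hA : @IsClosed X T A) (U : Set A)
    (hU : AlphaOpen (TopologicalSpace.induced (Subtype.val : A → X) T) U) :
    AlphaOpen T ((Subtype.val '' U) ∪ Aᶜ) := by
  letI := T
  set S : Set X := (Subtype.val '' U) ∪ Aᶜ with hS
  -- the subspace topology on `A` is definitionally the induced topology
  have hU' : U ⊆ interior (closure (interior U)) := hU
  obtain ⟨V, hVopen, hVG⟩ : ∃ V, IsOpen V ∧ Subtype.val ⁻¹' V = interior U :=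
    isOpen_induced_iff.mp (isOpen_interior (s := U))
  have hVsubS : V ⊆ S := by
    intro y hy
    by_cases hyA : y ∈ A
    · exact Or.inl ⟨⟨y, hyA⟩, interior_subset (hVG ▸ hy : (⟨y, hyA⟩ : A) ∈ interior U), rfl⟩
    · exact Or.inr hyA
  have hAcS : Aᶜ ⊆ S := subset_union_right
  have hint : V ∪ Aᶜ ⊆ interior S :=
    interior_maximal (union_subset hVsubS hAcS) (hVopen.union hA.isOpen_compl)
  intro x hx
  have hmono : interior (closure (V ∪ Aᶜ)) ⊆ interior (closure (interior S)) :=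
    interior_mono (closure_mono hint)
  rcases hx with hx | hx
  · obtain ⟨a, haU, rfl⟩ := hx
    have h1 : a ∈ interior (closure (interior U)) := hU' haU
    -- extract an open neighbourhood in X
    have h2 : closure (interior U) ∈ nhds a := mem_interior_iff_mem_nhds.mp h1
    rw [nhds_induced] at h2
    obtain ⟨N, hN, hNsub⟩ := h2
    obtain ⟨O, hOsub, hOopen, haO⟩ := mem_nhds_iff.mp hN
    apply hmono
    rw [mem_interior]
    refine ⟨O, ?_, hOopen, haO⟩
    intro y hy
    by_cases hyA : y ∈ A
    · have hy' : (⟨y, hyA⟩ : A) ∈ closure (interior U) := hNsub (hOsub hy)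
      have : y ∈ closure (Subtype.val '' (interior U)) := closure_subtype.mp hy'
      refine closure_mono ?_ this
      intro z hz
      obtain ⟨b, hb, rfl⟩ := hz
      exact Or.inl (show b ∈ Subtype.val ⁻¹' V from hVG.symm ▸ hb)
    · exact subset_closure (Or.inr hyA)
  · exact hmono (mem_interior.mpr ⟨Aᶜ, subset_union_right.trans subset_closure,
      hA.isOpen_compl, hx⟩)

/-- every closed subspace of an α-subparacompact space is
α-subparacompact. -/
theorem alphaSubparacompact_of_isClosed (T : TopologicalSpace X)
    (hX : AlphaSubparacompact T) (A : Set X) (hA : @IsClosed X T A) :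
    AlphaSubparacompact (TopologicalSpace.induced (Subtype.val : A → X) T) := by
  letI := T
  intro 𝒰 h𝒰 hcov
  by_cases hne : 𝒰.Nonempty
  · -- main case: transfer the cover to X
    set f : Set A → Set X := fun U => (Subtype.val '' U) ∪ Aᶜ with hf
    have hcovX : ⋃₀ (f '' 𝒰) = univ := by
      apply eq_univ_of_forall
      intro x
      by_cases hxA : x ∈ A
      · have : (⟨x, hxA⟩ : A) ∈ ⋃₀ 𝒰 := hcov ▸ mem_univ _
        obtain ⟨U, hU𝒰, hxU⟩ := this
        exact ⟨f U, mem_image_of_mem f hU𝒰, Or.inl ⟨⟨x, hxA⟩, hxU, rfl⟩⟩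
      · obtain ⟨U, hU𝒰⟩ := hne
        exact ⟨f U, mem_image_of_mem f hU𝒰, Or.inr hxA⟩
    have halphaX : ∀ W ∈ f '' 𝒰, AlphaOpen T W := by
      rintro W ⟨U, hU𝒰, rfl⟩
      exact alphaOpen_union_compl_of_subspace T A hA U (h𝒰 U hU𝒰)
    obtain ⟨𝒱, h𝒱cl, ⟨𝒲, h𝒲eq, h𝒲disc⟩, h𝒱ref, h𝒱cov⟩ := hX (f '' 𝒰) halphaX hcovX
    set g : Set X → Set A := fun F => Subtype.val ⁻¹' F with hg
    refine ⟨g '' 𝒱, ?_, ⟨fun n => g '' (𝒲 n), ?_, ?_⟩, ?_, ?_⟩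
    · rintro V ⟨F, hF𝒱, rfl⟩
      exact (h𝒱cl F hF𝒱).preimage continuous_subtype_val
    · rw [h𝒲eq, image_iUnion]
    · intro n a
      obtain ⟨N, hN, hNss⟩ := h𝒲disc n (a : X)
      refine ⟨Subtype.val ⁻¹' N, ?_, ?_⟩
      · exact continuous_subtype_val.continuousAt.preimage_mem_nhds hN
      · rintro V ⟨⟨F₁, hF₁, rfl⟩, b₁, hb₁⟩ V' ⟨⟨F₂, hF₂, rfl⟩, b₂, hb₂⟩
        have h1 : F₁ = F₂ := by
          refine hNss ⟨hF₁, (b₁ : X), hb₁.1, hb₁.2⟩ ⟨hF₂, (b₂ : X), hb₂.1, hb₂.2⟩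
        rw [h1]
    · rintro V ⟨F, hF𝒱, rfl⟩
      obtain ⟨W, hW, hFW⟩ := h𝒱ref F hF𝒱
      obtain ⟨U, hU𝒰, rfl⟩ := hW
      refine ⟨U, hU𝒰, ?_⟩
      intro a ha
      rcases hFW ha with h | h
      · obtain ⟨b, hb, hba⟩ := h
        rwa [← Subtype.coe_injective hba]
      · exact absurd a.2 h
    · apply eq_univ_of_forall
      intro a
      have : (a : X) ∈ ⋃₀ 𝒱 := h𝒱cov ▸ mem_univ _
      obtain ⟨F, hF𝒱, haF⟩ := this
      exact ⟨g F, mem_image_of_mem g hF𝒱, haF⟩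
  · -- degenerate case: `𝒰 = ∅`, so the subspace is empty
    rw [not_nonempty_iff_eq_empty] at hne
    subst hne
    exact ⟨∅, by simp, ⟨fun _ => ∅, by simp, fun n a => absurd (hcov ▸ mem_univ a) (by simp)⟩,
      by simp [Refines], hcov⟩
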